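/- Let G = (V,E) be a connected weighted graph, B a natural number, and suppose there exist B+2 vertices of G at pairwise distance greater than D. Then every graph obtained from G by adding at most B new edges (each of cost at least 1, with non-negative weights) has diameter greater than D. Consequently, the optimal diameter D^B_opt achievable by adding edges of total cost at most B is greater than D. -/

import Mathlib

open scoped ENNReal

noncomputable def walkWeight {V : Type*} {G : SimpleGraph V} (w : V → V → ℝ≥0∞) {u v : V}
    (p : G.Walk u v) : ℝ≥0∞ :=
  (p.darts.map fun d => w d.toProd.1 d.toProd.2).sum

noncomputable def wdist {V : Type*} (G : SimpleGraph V) (w : V → V → ℝ≥0∞) (u v : V) : ℝ≥0∞ :=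
  ⨅ p : G.Walk u v, walkWeight w p

noncomputable def wdiam {V : Type*} (G : SimpleGraph V) (w : V → V → ℝ≥0∞) : ℝ≥0∞ :=
  ⨆ x, ⨆ y, wdist G w x y

/-- `G'` is a `B`-augmentation of `G` w.r.t. the cost function `cst`: it is obtained from `G`
by adding a set of non-edges of total cost at most `B`. -/
def IsAug {V : Type*} (G : SimpleGraph V) (cst : Sym2 V → ℕ) (B : ℕ)
    (G' : SimpleGraph V) : Prop :=
  ∃ F : Finset (Sym2 V), (∀ e ∈ F, e ∉ G.edgeSet ∧ ¬ e.IsDiag) ∧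
    (∑ e ∈ F, cst e) ≤ B ∧ G' = G ⊔ SimpleGraph.fromEdgeSet ↑F

section Aux

variable {V : Type*} (w : V → V → ℝ≥0∞)

/-- Add a single shortcut edge `(e.1, e.2)` of weight `w e.1 e.2` to the premetric `d`. -/
noncomputable def addP (d : V → V → ℝ≥0∞) (e : V × V) : V → V → ℝ≥0∞ :=
  fun p q => min (d p q)
    (min (d p e.1 + w e.1 e.2 + d e.2 q) (d p e.2 + w e.1 e.2 + d e.1 q))

/-- Add a list of shortcut edges. -/
noncomputable def dList : List (V × V) → (V → V → ℝ≥0∞) → V → V → ℝ≥0∞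
  | [], d => d
  | e :: L, d => dList L (addP w d e)

lemma addP_le (d : V → V → ℝ≥0∞) (e : V × V) (p q : V) : addP w d e p q ≤ d p q :=
  min_le_left _ _

lemma dList_le (L : List (V × V)) : ∀ (d : V → V → ℝ≥0∞) (p q : V), dList w L d p q ≤ d p q := by
  induction L with
  | nil => intro d p q; exact le_rfl
  | cons e L ih => intro d p q; exact (ih _ p q).trans (addP_le w d e p q)

lemma addP_symm {d : V → V → ℝ≥0∞} (hd : ∀ x y, d x y = d y x) (e : V × V) (p q : V) :
    addP w d e p q = addP w d e q p := by
  have h2 : d p e.1 + w e.1 e.2 + d e.2 q = d q e.2 + w e.1 e.2 + d e.1 p := by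
    rw [hd p e.1, hd e.2 q]; ring
  have h3 : d p e.2 + w e.1 e.2 + d e.1 q = d q e.1 + w e.1 e.2 + d e.2 p := by
    rw [hd p e.2, hd e.1 q]; ring
  simp only [addP, hd p q, h2, h3, min_comm (d q e.2 + w e.1 e.2 + d e.1 p)]

lemma addP_self {d : V → V → ℝ≥0∞} (h0 : ∀ x, d x x = 0) (e : V × V) (x : V) :
    addP w d e x x = 0 :=
  le_antisymm ((addP_le w d e x x).trans_eq (h0 x)) zero_le

lemma addP_triangle {d : V → V → ℝ≥0∞} (htri : ∀ x y z, d x z ≤ d x y + d y z) (e : V × V) :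
    ∀ p r q, addP w d e p q ≤ addP w d e p r + addP w d e r q := by
  obtain ⟨u, v⟩ := e
  intro p r q
  have min3 : ∀ a b c : ℝ≥0∞, min a (min b c) = a ∨ min a (min b c) = b ∨
      min a (min b c) = c := by
    intro a b c
    rcases min_cases a (min b c) with ⟨h, -⟩ | ⟨h, -⟩
    · exact Or.inl h
    · rcases min_cases b c with ⟨h', -⟩ | ⟨h', -⟩
      · exact Or.inr (Or.inl (h.trans h'))
      · exact Or.inr (Or.inr (h.trans h'))
  show min (d p q) (min (d p u + w u v + d v q) (d p v + w u v + d u q)) ≤ _ + _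
  have t1 : addP w d (u, v) p q ≤ d p q := min_le_left _ _
  have t2 : addP w d (u, v) p q ≤ d p u + w u v + d v q :=
    le_trans (min_le_right _ _) (min_le_left _ _)
  have t3 : addP w d (u, v) p q ≤ d p v + w u v + d u q :=
    le_trans (min_le_right _ _) (min_le_right _ _)
  rcases min3 (d p r) (d p u + w u v + d v r) (d p v + w u v + d u r) with hX | hX | hX <;>
    rcases min3 (d r q) (d r u + w u v + d v q) (d r v + w u v + d u q) with hY | hY | hY <;>
      rw [show (min (d p r) (min (d p u + w u v + d v r) (d p v + w u v + d u r))) =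
        addP w d (u, v) p r from rfl] at hX <;>
      rw [show (min (d r q) (min (d r u + w u v + d v q) (d r v + w u v + d u q))) =
        addP w d (u, v) r q from rfl] at hY <;>
      rw [show (min (d p q) (min (d p u + w u v + d v q) (d p v + w u v + d u q))) =
        addP w d (u, v) p q from rfl] <;> rw [hX, hY]
  · exact t1.trans (htri p r q)
  · refine t2.trans ?_
    calc d p u + w u v + d v q ≤ (d p r + d r u) + w u v + d v q := by
          gcongr; exact htri p r u
      _ = d p r + (d r u + w u v + d v q) := by ring
  · refine t3.trans ?_
    calc d p v + w u v + d u q ≤ (d p r + d r v) + w u v + d u q := by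
          gcongr; exact htri p r v
      _ = d p r + (d r v + w u v + d u q) := by ring
  · refine t2.trans ?_
    calc d p u + w u v + d v q ≤ d p u + w u v + (d v r + d r q) := by
          gcongr; exact htri v r q
      _ = (d p u + w u v + d v r) + d r q := by ring
  · refine t2.trans ?_
    calc d p u + w u v + d v q ≤ (d p u + w u v + d v q) + (d v r + (d r u + w u v)) :=
          le_self_add
      _ = (d p u + w u v + d v r) + (d r u + w u v + d v q) := by ring
  · refine t1.trans ?_
    calc d p q ≤ d p u + d u q := htri p u q
      _ ≤ (d p u + d u q) + (w u v + d v r + (d r v + w u v)) := le_self_add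
      _ = (d p u + w u v + d v r) + (d r v + w u v + d u q) := by ring
  · refine t3.trans ?_
    calc d p v + w u v + d u q ≤ d p v + w u v + (d u r + d r q) := by
          gcongr; exact htri u r q
      _ = (d p v + w u v + d u r) + d r q := by ring
  · refine t1.trans ?_
    calc d p q ≤ d p v + d v q := htri p v q
      _ ≤ (d p v + d v q) + (w u v + d u r + (d r u + w u v)) := le_self_add
      _ = (d p v + w u v + d u r) + (d r u + w u v + d v q) := by ring
  · refine t3.trans ?_
    calc d p v + w u v + d u q ≤ (d p v + w u v + d u q) + (d u r + (d r v + w u v)) :=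
          le_self_add
      _ = (d p v + w u v + d u r) + (d r v + w u v + d u q) := by ring

lemma dList_symm (L : List (V × V)) : ∀ {d : V → V → ℝ≥0∞}, (∀ x y, d x y = d y x) →
    ∀ p q, dList w L d p q = dList w L d q p := by
  induction L with
  | nil => intro d hd p q; exact hd p q
  | cons e L ih => intro d hd p q; exact ih (addP_symm w hd e) p q

/-- The key single-edge lemma: if all points of `S` are pairwise farther than `D`, then after
adding one shortcut edge `(u,v)` of weight `t`, all points of `S` except possibly one are
still pairwise farther than `D`. -/
lemma single_edge {D : ℝ≥0∞} (hD : D ≠ ⊤) {d : V → V → ℝ≥0∞}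
    (hsym : ∀ x y, d x y = d y x) (htri : ∀ x y z, d x z ≤ d x y + d y z)
    (u v : V) (t : ℝ≥0∞) (S : Finset V) (hne : S.Nonempty)
    (hfar : ∀ p ∈ S, ∀ q ∈ S, p ≠ q → D < d p q) :
    ∃ x : V, ∀ p q, p ∈ S → q ∈ S → p ≠ q → p ≠ x → q ≠ x →
      D < min (d p q) (min (d p u + t + d v q) (d p v + t + d u q)) := by
  set Arc : V → V → Prop := fun p q => p ∈ S ∧ q ∈ S ∧ p ≠ q ∧ d p u + t + d v q ≤ D
    with hArcDef
  have hfin : ∀ {p q : V}, Arc p q → d p u ≠ ⊤ ∧ d v q ≠ ⊤ := by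
    rintro p q ⟨-, -, -, h⟩
    constructor
    · exact ne_top_of_le_ne_top hD (le_trans (le_trans le_self_add le_self_add) h)
    · exact ne_top_of_le_ne_top hD (le_trans le_add_self h)
  have F1 : ∀ z x y, Arc z x → Arc x y → False := by
    rintro z x y hzx hxy
    have hxu : d x u ≠ ⊤ := (hfin hxy).1
    have hvx : d v x ≠ ⊤ := (hfin hzx).2
    obtain ⟨hzS, hxS, hzx', hzx2⟩ := hzx
    obtain ⟨-, hyS, hxy', hxy2⟩ := hxy
    have h1 : d x u + (t + d v y) < d x u + d z u := by
      calc d x u + (t + d v y) = d x u + t + d v y := by ring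
        _ ≤ D := hxy2
        _ < d z x := hfar z hzS x hxS hzx'
        _ ≤ d z u + d u x := htri z u x
        _ = d x u + d z u := by rw [hsym u x]; ring
    have step1 : t + d v y < d z u := (ENNReal.add_lt_add_iff_left hxu).mp h1
    have h2 : d v x + (d z u + t) < d v x + d v y := by
      calc d v x + (d z u + t) = d z u + t + d v x := by ring
        _ ≤ D := hzx2
        _ < d x y := hfar x hxS y hyS hxy'
        _ ≤ d x v + d v y := htri x v y
        _ = d v x + d v y := by rw [hsym x v]
    have step2 : d z u + t < d v y := (ENNReal.add_lt_add_iff_left hvx).mp h2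
    exact lt_irrefl _ (((step1.trans_le le_self_add).trans step2).trans_le le_add_self)
  have F2 : ∀ p₁ q₁ p₂ q₂, Arc p₁ q₁ → Arc p₂ q₂ → p₁ ≠ p₂ → q₁ ≠ q₂ → False := by
    rintro p₁ q₁ p₂ q₂ ⟨hp₁, hq₁, -, h₁⟩ ⟨hp₂, hq₂, -, h₂⟩ hpp hqq
    have : D + D < D + D := by
      calc D + D < d p₁ p₂ + d q₁ q₂ :=
            ENNReal.add_lt_add (hfar p₁ hp₁ p₂ hp₂ hpp) (hfar q₁ hq₁ q₂ hq₂ hqq)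
        _ ≤ (d p₁ u + d u p₂) + (d q₁ v + d v q₂) := add_le_add (htri p₁ u p₂) (htri q₁ v q₂)
        _ = (d p₁ u + d v q₁) + (d p₂ u + d v q₂) := by
            rw [hsym u p₂, hsym q₁ v]; ring
        _ ≤ (d p₁ u + t + d v q₁) + (d p₂ u + t + d v q₂) := by
            have pad : ∀ a b : ℝ≥0∞, a + b ≤ a + t + b := fun a b => by
              calc a + b ≤ a + b + t := le_self_add
                _ = a + t + b := by ring
            exact add_le_add (pad _ _) (pad _ _)
        _ ≤ D + D := add_le_add h₁ h₂
    exact lt_irrefl _ this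
  -- find the common vertex x of all arcs
  have key : ∃ x : V, ∀ p q, Arc p q → p = x ∨ q = x := by
    by_cases hex : ∃ p q, Arc p q
    · obtain ⟨p₀, q₀, h₀⟩ := hex
      by_cases h2 : ∃ p q, Arc p q ∧ q ≠ q₀
      · obtain ⟨p₁, q₁, hA₁, hq₁⟩ := h2
        have hp₁ : p₁ = p₀ := by
          by_contra hne'
          exact F2 p₁ q₁ p₀ q₀ hA₁ h₀ hne' hq₁
        subst hp₁
        refine ⟨p₁, fun p q hpq => ?_⟩
        by_contra hcon
        push_neg at hcon
        obtain ⟨hp, hq⟩ := hcon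
        by_cases hqq0 : q = q₀
        · subst hqq0
          exact F2 p q p₁ q₁ hpq hA₁ hp (Ne.symm hq₁)
        · -- q ≠ q₀ so p = p₁ by the same disjointness with h₀; contradiction with hp
          exact F2 p q p₁ q₀ hpq h₀ hp hqq0
      · push_neg at h2
        refine ⟨q₀, fun p q hpq => Or.inr (h2 p q hpq)⟩
    · push_neg at hex
      exact ⟨hne.choose, fun p q hpq => absurd hpq (hex p q)⟩
  obtain ⟨x, hx⟩ := key
  refine ⟨x, fun p q hp hq hpq hpx hqx => ?_⟩
  have harc1 : ¬ Arc p q := fun h => by rcases hx p q h with h' | h' <;> [exact hpx h'; exact hqx h']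
  have harc2 : ¬ Arc q p := fun h => by rcases hx q p h with h' | h' <;> [exact hqx h'; exact hpx h']
  rw [lt_min_iff, lt_min_iff]
  refine ⟨hfar p hp q hq hpq, ?_, ?_⟩
  · rcases lt_or_ge D (d p u + t + d v q) with h | h
    · exact h
    · exact absurd ⟨hp, hq, hpq, h⟩ harc1
  · rcases lt_or_ge D (d p v + t + d u q) with h | h
    · exact h
    · refine absurd ⟨hq, hp, hpq.symm, ?_⟩ harc2
      calc d q u + t + d v p = d p v + t + d u q := by rw [hsym q u, hsym v p]; ring
        _ ≤ D := h

lemma main_lemma {D : ℝ≥0∞} (hD : D ≠ ⊤) (L : List (V × V)) :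
    ∀ (d : V → V → ℝ≥0∞) (S : Finset V),
    (∀ x y, d x y = d y x) → (∀ x y z, d x z ≤ d x y + d y z) →
    (∀ p ∈ S, ∀ q ∈ S, p ≠ q → D < d p q) → L.length + 2 ≤ S.card →
    ∃ p ∈ S, ∃ q ∈ S, p ≠ q ∧ D < dList w L d p q := by
  induction L with
  | nil =>
    intro d S hsym htri hfar hcard
    obtain ⟨p, hp, q, hq, hpq⟩ := Finset.one_lt_card.mp (show 1 < S.card by simp at hcard; omega)
    exact ⟨p, hp, q, hq, hpq, hfar p hp q hq hpq⟩
  | cons e L ih =>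
    intro d S hsym htri hfar hcard
    classical
    obtain ⟨u, v⟩ := e
    have hne : S.Nonempty := Finset.card_pos.mp (by omega)
    obtain ⟨x, hx⟩ := single_edge hD hsym htri u v (w u v) S hne hfar
    have hcard' : L.length + 2 ≤ (S.erase x).card := by
      have := Finset.pred_card_le_card_erase (s := S) (a := x)
      simp only [List.length_cons] at hcard
      omega
    obtain ⟨p, hp, q, hq, hpq, hlt⟩ := ih (addP w d (u, v)) (S.erase x)
      (addP_symm w hsym (u, v)) (addP_triangle w htri (u, v))
      (fun p hp q hq hpq => by
        rw [Finset.mem_erase] at hp hq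
        exact hx p q hp.2 hq.2 hpq hp.1 hq.1) hcard'
    rw [Finset.mem_erase] at hp hq
    exact ⟨p, hp.2, q, hq.2, hpq, hlt⟩

lemma dList_self (L : List (V × V)) : ∀ {d : V → V → ℝ≥0∞}, (∀ x, d x x = 0) →
    ∀ x, dList w L d x x = 0 := fun h0 x =>
  le_antisymm ((dList_le w L _ x x).trans_eq (h0 x)) zero_le

lemma dList_triangle (L : List (V × V)) : ∀ {d : V → V → ℝ≥0∞},
    (∀ x y z, d x z ≤ d x y + d y z) →
    ∀ x y z, dList w L d x z ≤ dList w L d x y + dList w L d y z := by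
  induction L with
  | nil => intro d htri; exact htri
  | cons e L ih => intro d htri; exact ih (addP_triangle w htri e)

lemma dList_edge (L : List (V × V)) : ∀ {d : V → V → ℝ≥0∞}, (∀ x, d x x = 0) →
    ∀ u v : V, (u, v) ∈ L → dList w L d u v ≤ w u v := by
  induction L with
  | nil => intro d h0 u v h; simp at h
  | cons e L ih =>
    intro d h0 u v hmem
    rcases List.mem_cons.mp hmem with h | h
    · subst h
      calc dList w L (addP w d (u, v)) u v ≤ addP w d (u, v) u v := dList_le w L _ u v
        _ ≤ d u u + w u v + d v v := le_trans (min_le_right _ _) (min_le_left _ _)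
        _ = w u v := by rw [h0, h0]; simp
    · exact ih (addP_self w h0 e) u v h

lemma walkWeight_cons {G : SimpleGraph V} {x y z : V} (h : G.Adj x y) (p : G.Walk y z) :
    walkWeight w (SimpleGraph.Walk.cons h p) = w x y + walkWeight w p := by
  simp [walkWeight]

lemma wdist_le_walk {G : SimpleGraph V} {x y : V} (p : G.Walk x y) :
    wdist G w x y ≤ walkWeight w p :=
  iInf_le _ p

lemma wdist_self {G : SimpleGraph V} (x : V) : wdist G w x x = 0 :=
  le_antisymm ((wdist_le_walk w SimpleGraph.Walk.nil).trans_eq (by simp [walkWeight])) zero_le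

lemma walkWeight_append {G : SimpleGraph V} {x y z : V} (p : G.Walk x y) (q : G.Walk y z) :
    walkWeight w (p.append q) = walkWeight w p + walkWeight w q := by
  simp [walkWeight, SimpleGraph.Walk.darts_append]

lemma walkWeight_reverse (hw : ∀ x y, w x y = w y x) {G : SimpleGraph V} {x y : V}
    (p : G.Walk x y) : walkWeight w p.reverse = walkWeight w p := by
  unfold walkWeight
  rw [SimpleGraph.Walk.darts_reverse, List.map_reverse, List.sum_reverse, List.map_map]
  congr 1
  refine List.map_congr_left fun d _ => ?_
  exact hw _ _

lemma wdist_symm (hw : ∀ x y, w x y = w y x) {G : SimpleGraph V} (x y : V) :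
    wdist G w x y = wdist G w y x := by
  have h : ∀ a b : V, wdist G w a b ≤ wdist G w b a := fun a b =>
    le_iInf fun p => (wdist_le_walk w p.reverse).trans_eq (walkWeight_reverse w hw p)
  exact le_antisymm (h x y) (h y x)

lemma wdist_triangle {G : SimpleGraph V} (x r y : V) :
    wdist G w x y ≤ wdist G w x r + wdist G w r y := by
  have key : ∀ (p : G.Walk x r) (q : G.Walk r y),
      wdist G w x y ≤ walkWeight w p + walkWeight w q := fun p q =>
    (wdist_le_walk w (p.append q)).trans_eq (walkWeight_append w p q)
  calc wdist G w x r + wdist G w r y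
      = ⨅ p : G.Walk x r, (walkWeight w p + wdist G w r y) := ENNReal.iInf_add
    _ ≥ wdist G w x y := by
        refine le_iInf fun p => ?_
        calc walkWeight w p + wdist G w r y
            = ⨅ q : G.Walk r y, (walkWeight w p + walkWeight w q) := ENNReal.add_iInf
          _ ≥ wdist G w x y := le_iInf fun q => key p q

lemma wdist_le_weight {G : SimpleGraph V} {x y : V} (h : G.Adj x y) :
    wdist G w x y ≤ w x y :=
  (wdist_le_walk w (SimpleGraph.Walk.cons h SimpleGraph.Walk.nil)).trans_eq
    (by simp [walkWeight])

lemma le_walkWeight {G' : SimpleGraph V} {dd : V → V → ℝ≥0∞}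
    (h0 : ∀ x, dd x x = 0) (htri : ∀ x y z, dd x z ≤ dd x y + dd y z)
    (hedge : ∀ p q, G'.Adj p q → dd p q ≤ w p q) :
    ∀ {a b : V} (pk : G'.Walk a b), dd a b ≤ walkWeight w pk := by
  intro a b pk
  induction pk with
  | nil => exact le_trans (h0 _).le (by simp [walkWeight])
  | cons h pk ih =>
    rw [walkWeight_cons]
    exact (htri _ _ _).trans (add_le_add (hedge _ _ h) ih)

lemma dd_le_wdist {G' : SimpleGraph V} {dd : V → V → ℝ≥0∞}
    (h0 : ∀ x, dd x x = 0) (htri : ∀ x y z, dd x z ≤ dd x y + dd y z)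
    (hedge : ∀ p q, G'.Adj p q → dd p q ≤ w p q) (p q : V) :
    dd p q ≤ wdist G' w p q :=
  le_iInf fun pk => le_walkWeight w h0 htri hedge pk

lemma exists_list (F : Finset (Sym2 V)) :
    ∃ L : List (V × V), L.length = F.card ∧ (∀ e ∈ F, ∃ x ∈ L, Sym2.mk x.1 x.2 = e) ∧
      (∀ x ∈ L, Sym2.mk x.1 x.2 ∈ F) := by
  classical
  induction F using Finset.induction_on with
  | empty => exact ⟨[], rfl, by simp, by simp⟩
  | @insert a s ha ih =>
    obtain ⟨L, hlen, hcov, hmem⟩ := ih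
    induction a using Sym2.ind with
    | _ u v =>
      refine ⟨(u, v) :: L, ?_, ?_, ?_⟩
      · simp [Finset.card_insert_of_notMem ha, hlen]
      · intro e he
        rcases Finset.mem_insert.mp he with rfl | he
        · exact ⟨(u, v), List.mem_cons_self, rfl⟩
        · obtain ⟨x, hx, hxe⟩ := hcov e he
          exact ⟨x, List.mem_cons_of_mem _ hx, hxe⟩
      · intro x hx
        rcases List.mem_cons.mp hx with rfl | hx
        · exact Finset.mem_insert_self _ _
        · exact Finset.mem_insert_of_mem (hmem x hx)

end Aux

/-- If `G` contains `B+2` vertices at pairwise distance greater than `D`, then every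
`B`-augmentation of `G` (costs are at least 1) has diameter greater than `D`; consequently,
the optimal diameter of a `B`-augmentation is greater than `D`. -/
theorem stmt2 {V : Type*} [Fintype V] (G : SimpleGraph V) (hconn : G.Connected)
    (w : V → V → ℝ≥0∞) (hw : ∀ x y, w x y = w y x)
    (cst : Sym2 V → ℕ) (hcst : ∀ e, 1 ≤ cst e) (B : ℕ) (D : ℝ≥0∞)
    (A : Finset V) (hA : A.card = B + 2)
    (hfar : ∀ x ∈ A, ∀ y ∈ A, x ≠ y → D < wdist G w x y) :
    (∀ G' : SimpleGraph V, IsAug G cst B G' → D < wdiam G' w) ∧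
      D < ⨅ (G' : SimpleGraph V) (_ : IsAug G cst B G'), wdiam G' w := by
  classical
  obtain ⟨x₀, hx₀, y₀, hy₀, hxy₀⟩ := Finset.one_lt_card.mp (by omega : 1 < A.card)
  have hD : D ≠ ⊤ := (hfar x₀ hx₀ y₀ hy₀ hxy₀).ne_top
  have part1 : ∀ G' : SimpleGraph V, IsAug G cst B G' → D < wdiam G' w := by
    rintro G' ⟨F, hF, hcost, rfl⟩
    obtain ⟨L, hlen, hcov, hmemL⟩ := exists_list F
    have h1 : F.card ≤ B := by
      calc F.card = ∑ _e ∈ F, 1 := by simp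
        _ ≤ ∑ e ∈ F, cst e := Finset.sum_le_sum fun e _ => hcst e
        _ ≤ B := hcost
    have hcard : L.length + 2 ≤ A.card := by omega
    have hsym0 : ∀ x y, wdist G w x y = wdist G w y x := wdist_symm w hw
    have htri0 : ∀ x y z, wdist G w x z ≤ wdist G w x y + wdist G w y z := fun x y z =>
      wdist_triangle w x y z
    have h00 : ∀ x, wdist G w x x = 0 := wdist_self w
    obtain ⟨p, hp, q, hq, hpq, hlt⟩ := main_lemma w hD L (wdist G w) A hsym0 htri0
      (fun p hp q hq hpq => hfar p hp q hq hpq) hcard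
    have hedge : ∀ a b, (G ⊔ SimpleGraph.fromEdgeSet (↑F : Set (Sym2 V))).Adj a b →
        dList w L (wdist G w) a b ≤ w a b := by
      intro a b hab
      rw [SimpleGraph.sup_adj] at hab
      rcases hab with hab | hab
      · exact (dList_le w L _ a b).trans (wdist_le_weight w hab)
      · rw [SimpleGraph.fromEdgeSet_adj] at hab
        obtain ⟨he, hne'⟩ := hab
        obtain ⟨⟨u, v⟩, hxL, hxe⟩ := hcov _ (Finset.mem_coe.mp he)
        rcases Sym2.eq_iff.mp hxe with ⟨h1, h2⟩ | ⟨h1, h2⟩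
        · rw [← h1, ← h2]
          exact dList_edge w L h00 u v hxL
        · rw [← h1, ← h2]
          calc dList w L (wdist G w) v u = dList w L (wdist G w) u v :=
              dList_symm w L hsym0 v u
            _ ≤ w u v := dList_edge w L h00 u v hxL
            _ = w v u := hw u v
    have hfinal : D < wdist (G ⊔ SimpleGraph.fromEdgeSet (↑F : Set (Sym2 V))) w p q :=
      hlt.trans_le (dd_le_wdist w (dList_self w L h00) (dList_triangle w L htri0) hedge p q)
    exact hfinal.trans_le
      (le_iSup₂ (f := fun x y => wdist (G ⊔ SimpleGraph.fromEdgeSet (↑F : Set (Sym2 V))) w x y) p q)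
  refine ⟨part1, ?_⟩
  have hfin : Finite (SimpleGraph V) :=
    Finite.of_injective (fun G : SimpleGraph V => G.Adj) fun a b h => SimpleGraph.ext h
  obtain ⟨G₀, hG₀⟩ := Finite.exists_min
    (fun G' : SimpleGraph V => ⨅ (_ : IsAug G cst B G'), wdiam G' w)
  have hlt : D < ⨅ (_ : IsAug G cst B G₀), wdiam G₀ w := by
    by_cases h : IsAug G cst B G₀
    · rw [iInf_pos h]; exact part1 _ h
    · rw [iInf_neg h]; exact hD.lt_top
  exact hlt.trans_le (le_iInf hG₀)
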